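/- (Reduction to a smaller order statistic, Lemma C.3.) Fix Y ∈ ℤ, integers 1 ≤ r ≤ D, 1 ≤ d ≤ D, and (z_1,…,z_d) ∈ ℤ^d with counts (n1, n2, n3) relative to Y. If n1 ≥ r or n3 ≥ D − r + 1, then P(os_r(Z_{1:D}) = Y ∧ Z_1 = z_1, …, Z_d = z_d) = 0. If n1 < r and n3 < D − r + 1, then P(os_r(Z_{1:D}) = Y ∧ Z_1 = z_1, …, Z_d = z_d) · f(Y)^{n2} = P(os_{r−n1}(Z_{1:D−n1−n3}) = Y ∧ Z_1 = Y, …, Z_{n2} = Y) · ∏_{t=1}^{d} f(z_t); equivalently (when ∏_t f(z_t) > 0), P(os_r(Z_{1:D}) = Y | Z_1 = z_1, …, Z_d = z_d) = P(os_{r−n1}(Z_{1:D−n1−n3}) = Y | Z_1 = ⋯ = Z_{n2} = Y). -/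

import Mathlib

open MeasureTheory

/-- The measure on ℤ with mass function `f`. -/
noncomputable def parentMeasure (f : ℤ → ℝ) : Measure ℤ :=
  Measure.count.withDensity fun z => ENNReal.ofReal (f z)

/-- `P f D S` is the probability of the event `S` under the `D`-fold product of the
measure on ℤ with pmf `f`, i.e. the law of `D` i.i.d. draws `Z = (Z_1, …, Z_D)` from `f`. -/
noncomputable def P (f : ℤ → ℝ) (D : ℕ) (S : Set (Fin D → ℤ)) : ℝ :=
  (Measure.pi (fun _ : Fin D => parentMeasure f) S).toReal

/-- The CDF of `f`: `F(y) = ∑_{t ≤ y} f(t)`. -/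
noncomputable def Fcdf (f : ℤ → ℝ) (y : ℤ) : ℝ := ∑' z : {t : ℤ // t ≤ y}, f z.1

/-- The number of entries of `z` that are `≤ y`. -/
def countLe {n : ℕ} (z : Fin n → ℤ) (y : ℤ) : ℕ :=
  (Finset.univ.filter fun i => z i ≤ y).card

/-- `osEq r z Y` says that the `r`-th smallest entry of `z` (counting multiplicity)
equals `Y`: the `r`-th order statistic is `≤ Y` but not `≤ Y - 1`. -/
def osEq {n : ℕ} (r : ℕ) (z : Fin n → ℤ) (Y : ℤ) : Prop :=
  r ≤ countLe z Y ∧ countLe z (Y - 1) < r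

/-- The order-statistic CDF `F^{(a,m)}(y) = ∑_{t=a}^{m} (m choose t) F(y)^t (1−F(y))^{m−t}`. -/
noncomputable def osCDF (f : ℤ → ℝ) (a m : ℕ) (y : ℤ) : ℝ :=
  ∑ t ∈ Finset.Icc a m, (m.choose t : ℝ) * Fcdf f y ^ t * (1 - Fcdf f y) ^ (m - t)

lemma parent_singleton (f : ℤ → ℝ) (a : ℤ) :
    parentMeasure f {a} = ENNReal.ofReal (f a) := by
  rw [parentMeasure, withDensity_apply _ (measurableSet_singleton a)]
  rw [lintegral_singleton]
  simp [Measure.count_singleton]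

instance count_sf : SigmaFinite (Measure.count : Measure ℤ) := by
  apply Measure.sigmaFinite_of_countable (S := Set.range fun n : ℤ => ({n} : Set ℤ))
    (Set.countable_range _)
  · rintro s ⟨n, rfl⟩; simp [Measure.count_singleton]
  · ext x; simp

instance parent_sf (f : ℤ → ℝ) : SigmaFinite (parentMeasure f) := by
  rw [parentMeasure]; infer_instance

lemma pi_singleton (f : ℤ → ℝ) (n : ℕ) (x : Fin n → ℤ) :
    Measure.pi (fun _ : Fin n => parentMeasure f) {x} = ∏ i, ENNReal.ofReal (f (x i)) := by
  rw [← Set.univ_pi_singleton x, Measure.pi_pi]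
  simp [parent_singleton]

lemma pi_apply (f : ℤ → ℝ) (n : ℕ) (S : Set (Fin n → ℤ)) :
    Measure.pi (fun _ : Fin n => parentMeasure f) S
      = ∑' x : S, ∏ i, ENNReal.ofReal (f (x.1 i)) := by
  have := tsum_measure_preimage_singleton (μ := Measure.pi (fun _ : Fin n => parentMeasure f))
    (s := S) (S.to_countable) (f := id) (fun y _ => by measurability)
  simp only [Set.preimage_id] at this
  rw [← this]
  exact tsum_congr fun b => by rw [pi_singleton]

lemma parent_prob (f : ℤ → ℝ) (hf0 : ∀ z, 0 ≤ f z) (hf1 : HasSum f 1) :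
    IsProbabilityMeasure (parentMeasure f) := by
  constructor
  rw [parentMeasure, withDensity_apply _ MeasurableSet.univ, Measure.restrict_univ,
    lintegral_count]
  rw [← ENNReal.ofReal_tsum_of_nonneg hf0 hf1.summable, hf1.tsum_eq]
  simp

def appendEquiv (d m : ℕ) (z : Fin d → ℤ) (Q : Set (Fin m → ℤ)) :
    Q ≃ {ω : Fin (d + m) → ℤ | (∀ t : Fin d, ω (Fin.castAdd m t) = z t) ∧
      (fun j => ω (Fin.natAdd d j)) ∈ Q} where
  toFun := fun ω' => ⟨Fin.append z ω'.1, by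
    refine ⟨fun t => Fin.append_left _ _ _, ?_⟩
    have : (fun j => Fin.append z ω'.1 (Fin.natAdd d j)) = ω'.1 := by
      funext j; exact Fin.append_right _ _ _
    rw [this]; exact ω'.2⟩
  invFun := fun ω => ⟨fun j => ω.1 (Fin.natAdd d j), ω.2.2⟩
  left_inv := fun ω' => by
    apply Subtype.ext; funext j; exact Fin.append_right _ _ _
  right_inv := fun ω => by
    apply Subtype.ext; funext i
    show Fin.append z (fun j => ω.1 (Fin.natAdd d j)) i = ω.1 i
    refine Fin.addCases (fun t => ?_) (fun j => ?_) i
    · rw [Fin.append_left]; exact (ω.2.1 t).symm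
    · exact Fin.append_right _ _ _

lemma pi_split (f : ℤ → ℝ) (d m : ℕ) (z : Fin d → ℤ) (Q : Set (Fin m → ℤ)) :
    Measure.pi (fun _ : Fin (d + m) => parentMeasure f)
      {ω | (∀ t : Fin d, ω (Fin.castAdd m t) = z t) ∧ (fun j => ω (Fin.natAdd d j)) ∈ Q}
    = (∏ t, ENNReal.ofReal (f (z t))) *
        Measure.pi (fun _ : Fin m => parentMeasure f) Q := by
  rw [pi_apply, pi_apply]
  rw [← Equiv.tsum_eq (appendEquiv d m z Q) (fun x => ∏ i, ENNReal.ofReal (f (x.1 i)))]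
  have key : ∀ ω' : Q, (∏ i : Fin (d+m), ENNReal.ofReal (f (Fin.append z ω'.1 i)))
      = (∏ t, ENNReal.ofReal (f (z t))) * ∏ j, ENNReal.ofReal (f (ω'.1 j)) := by
    intro ω'
    rw [Fin.prod_univ_add]
    congr 1
    · exact Finset.prod_congr rfl fun t _ => by rw [Fin.append_left]
    · exact Finset.prod_congr rfl fun j _ => by rw [Fin.append_right]
  calc ∑' ω' : Q, ∏ i, ENNReal.ofReal (f (((appendEquiv d m z Q) ω').1 i))
      = ∑' ω' : Q, ((∏ t, ENNReal.ofReal (f (z t))) * ∏ j, ENNReal.ofReal (f (ω'.1 j))) :=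
        tsum_congr fun ω' => key ω'
    _ = _ := by rw [ENNReal.tsum_mul_left]

lemma P_split (f : ℤ → ℝ) (hf0 : ∀ z, 0 ≤ f z) (hf1 : HasSum f 1)
    (d m : ℕ) (z : Fin d → ℤ) (Q : Set (Fin m → ℤ)) :
    P f (d + m) {ω | (∀ t : Fin d, ω (Fin.castAdd m t) = z t) ∧
        (fun j => ω (Fin.natAdd d j)) ∈ Q}
      = (∏ t, f (z t)) * P f m Q := by
  have hpm := parent_prob f hf0 hf1
  have : IsProbabilityMeasure (Measure.pi (fun _ : Fin m => parentMeasure f)) := by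
    infer_instance
  rw [P, P, pi_split, ENNReal.toReal_mul, ENNReal.toReal_prod]
  congr 1
  exact Finset.prod_congr rfl fun t _ => ENNReal.toReal_ofReal (hf0 _)

lemma countLe_append {d m : ℕ} (x : Fin d → ℤ) (x' : Fin m → ℤ) (y : ℤ) :
    countLe (Fin.append x x') y = countLe x y + countLe x' y := by
  unfold countLe
  rw [Finset.card_filter, Finset.card_filter, Finset.card_filter, Fin.sum_univ_add]
  congr 1
  · exact Finset.sum_congr rfl fun t _ => by rw [Fin.append_left]
  · exact Finset.sum_congr rfl fun j _ => by rw [Fin.append_right]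

lemma countLe_cast {n n' : ℕ} (h : n = n') (ω : Fin n' → ℤ) (y : ℤ) :
    countLe (ω ∘ Fin.cast h) y = countLe ω y := by
  subst h; rfl

lemma P_cast (f : ℤ → ℝ) {n n' : ℕ} (h : n = n') (S : Set (Fin n → ℤ))
    (S' : Set (Fin n' → ℤ)) (hS : ∀ ω : Fin n' → ℤ, ω ∈ S' ↔ (ω ∘ Fin.cast h) ∈ S) :
    P f n S = P f n' S' := by
  subst h
  congr 1
  ext ω
  have : (ω ∘ Fin.cast rfl) = ω := rfl
  rw [hS ω, this]

/-- **Lemma C.3** (reduction to a smaller order statistic): with counts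
`n1 = #{t : z_t < Y}`, `n2 = #{t : z_t = Y}`, `n3 = #{t : z_t > Y}` of the prefix `z ∈ ℤ^d`,
if `n1 ≥ r` or `n3 ≥ D − r + 1` the joint probability of the prefix with
`{os_r(Z_{1:D}) = Y}` vanishes; otherwise it reduces (after reweighting by `f(Y)^{n2}` and
`∏_t f(z_t)`) to the probability for order `D − n1 − n3` and rank `r − n1` with a prefix of
`n2` entries all equal to `Y`. -/
theorem reduction_to_smaller_order_statistic
    (f : ℤ → ℝ) (hf0 : ∀ z, 0 ≤ f z) (hf1 : HasSum f 1)
    (Y : ℤ) (D r d : ℕ) (hr1 : 1 ≤ r) (hrD : r ≤ D) (hd1 : 1 ≤ d) (hdD : d ≤ D)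
    (z : Fin d → ℤ) :
    ((r ≤ (Finset.univ.filter fun t => z t < Y).card ∨
        D - r + 1 ≤ (Finset.univ.filter fun t => Y < z t).card) →
      P f D {ω | osEq r ω Y ∧ ∀ t : Fin d, ω (Fin.castLE hdD t) = z t} = 0) ∧
    (((Finset.univ.filter fun t => z t < Y).card < r ∧
        (Finset.univ.filter fun t => Y < z t).card < D - r + 1) →
      P f D {ω | osEq r ω Y ∧ ∀ t : Fin d, ω (Fin.castLE hdD t) = z t} *
          f Y ^ (Finset.univ.filter fun t => z t = Y).card
        = P f (D - (Finset.univ.filter fun t => z t < Y).card -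
                (Finset.univ.filter fun t => Y < z t).card)
            {ω | osEq (r - (Finset.univ.filter fun t => z t < Y).card) ω Y ∧
              ∀ t, t.1 < (Finset.univ.filter fun t => z t = Y).card → ω t = Y} *
          ∏ t, f (z t)) := by
  set n1 := (Finset.univ.filter fun t => z t < Y).card with hn1
  set n2 := (Finset.univ.filter fun t => z t = Y).card with hn2
  set n3 := (Finset.univ.filter fun t => Y < z t).card with hn3
  have hd : n1 + n2 + n3 = d := by
    rw [hn1, hn2, hn3, Finset.card_filter, Finset.card_filter, Finset.card_filter,
      ← Finset.sum_add_distrib, ← Finset.sum_add_distrib]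
    calc (∑ t : Fin d, ((if z t < Y then 1 else 0) + (if z t = Y then 1 else 0)
            + if Y < z t then 1 else 0))
        = ∑ _t : Fin d, 1 := Finset.sum_congr rfl fun t _ => by split_ifs <;> omega
      _ = d := by simp
  have hA : countLe z Y = n1 + n2 := by
    rw [hn1, hn2, Finset.card_filter, Finset.card_filter, ← Finset.sum_add_distrib]
    rw [countLe, Finset.card_filter]
    exact Finset.sum_congr rfl fun t _ => by split_ifs <;> omega
  have hB : countLe z (Y - 1) = n1 := by
    rw [hn1, countLe, Finset.card_filter, Finset.card_filter]
    exact Finset.sum_congr rfl fun t _ => by split_ifs <;> omega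
  constructor
  · -- degenerate case: the event is empty
    intro h
    have he : {ω : Fin D → ℤ | osEq r ω Y ∧ ∀ t : Fin d, ω (Fin.castLE hdD t) = z t} = ∅ := by
      rw [Set.eq_empty_iff_forall_notMem]
      rintro ω ⟨⟨hos1, hos2⟩, hpre⟩
      rcases h with h | h
      · have hinj : n1 ≤ countLe ω (Y - 1) := by
          rw [hn1, countLe]
          apply Finset.card_le_card_of_injOn (Fin.castLE hdD)
          · intro t ht
            simp only [Finset.mem_coe, Finset.coe_filter, Finset.mem_filter, Finset.mem_univ, true_and, Set.mem_setOf_eq] at ht ⊢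
            rw [hpre t]; omega
          · intro a _ b _ hab
            exact Fin.castLE_injective hdD hab
        omega
      · have hinj : n3 ≤ (Finset.univ.filter fun i => Y < ω i).card := by
          rw [hn3]
          apply Finset.card_le_card_of_injOn (Fin.castLE hdD)
          · intro t ht
            simp only [Finset.mem_coe, Finset.coe_filter, Finset.mem_filter, Finset.mem_univ, true_and, Set.mem_setOf_eq] at ht ⊢
            rw [hpre t]; exact ht
          · intro a _ b _ hab
            exact Fin.castLE_injective hdD hab
        have hpart : countLe ω Y + (Finset.univ.filter fun i => Y < ω i).card = D := by
          rw [countLe]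
          have := Finset.card_filter_add_card_filter_not
            (s := (Finset.univ : Finset (Fin D))) (p := fun i => ω i ≤ Y)
          rw [Finset.card_univ, Fintype.card_fin] at this
          have hfe : (Finset.filter (fun a => ¬ ω a ≤ Y) Finset.univ)
              = (Finset.filter (fun i => Y < ω i) Finset.univ) := by
            apply Finset.filter_congr; intro i _; simp [not_le]
          rw [hfe] at this
          exact this
        omega
    rw [he]
    simp only [P, measure_empty, ENNReal.toReal_zero]
  · -- main case
    rintro ⟨h1, h2⟩
    obtain ⟨m, rfl⟩ : ∃ m, D = d + m := ⟨D - d, by omega⟩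
    set Q : Set (Fin m → ℤ) :=
      {ω' | r ≤ n1 + n2 + countLe ω' Y ∧ n1 + countLe ω' (Y - 1) < r} with hQ
    -- left side
    have hsetL : {ω : Fin (d + m) → ℤ | osEq r ω Y ∧ ∀ t : Fin d, ω (Fin.castLE hdD t) = z t}
        = {ω | (∀ t : Fin d, ω (Fin.castAdd m t) = z t) ∧ (fun j => ω (Fin.natAdd d j)) ∈ Q} := by
      ext ω
      simp only [Set.mem_setOf_eq]
      have hcast : ∀ t : Fin d, Fin.castLE hdD t = Fin.castAdd m t := fun t => rfl
      constructor
      · rintro ⟨⟨hos1, hos2⟩, hpre⟩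
        have hpre' : ∀ t : Fin d, ω (Fin.castAdd m t) = z t := fun t => by
          rw [← hcast t]; exact hpre t
        refine ⟨hpre', ?_⟩
        have hω : ω = Fin.append z (fun j => ω (Fin.natAdd d j)) := by
          funext i
          refine Fin.addCases (fun t => ?_) (fun j => ?_) i
          · rw [Fin.append_left]; exact hpre' t
          · rw [Fin.append_right]
        rw [hω, countLe_append, hA] at hos1
        rw [hω, countLe_append, hB] at hos2
        exact ⟨by omega, by omega⟩
      · rintro ⟨hpre, hQm⟩
        have hω : ω = Fin.append z (fun j => ω (Fin.natAdd d j)) := by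
          funext i
          refine Fin.addCases (fun t => ?_) (fun j => ?_) i
          · rw [Fin.append_left]; exact hpre t
          · rw [Fin.append_right]
        obtain ⟨hq1, hq2⟩ := hQm
        refine ⟨⟨?_, ?_⟩, fun t => by rw [hcast t]; exact hpre t⟩
        · rw [hω, countLe_append, hA]; omega
        · rw [hω, countLe_append, hB]; omega
    have hL : P f (d + m) {ω | osEq r ω Y ∧ ∀ t : Fin d, ω (Fin.castLE hdD t) = z t}
        = (∏ t, f (z t)) * P f m Q := by
      rw [hsetL]; exact P_split f hf0 hf1 d m z Q
    -- right side
    have hidx : d + m - n1 - n3 = n2 + m := by omega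
    have hsetR : {ω : Fin (n2 + m) → ℤ | osEq (r - n1) ω Y ∧ ∀ t, t.1 < n2 → ω t = Y}
        = {ω | (∀ t : Fin n2, ω (Fin.castAdd m t) = (fun _ : Fin n2 => Y) t) ∧
            (fun j => ω (Fin.natAdd n2 j)) ∈ Q} := by
      ext ω
      simp only [Set.mem_setOf_eq]
      have hA' : countLe (fun _ : Fin n2 => Y) Y = n2 := by
        simp [countLe]
      have hB' : countLe (fun _ : Fin n2 => Y) (Y - 1) = 0 := by
        rw [countLe, Finset.card_eq_zero, Finset.filter_eq_empty_iff]
        intro i _; omega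
      constructor
      · rintro ⟨⟨hos1, hos2⟩, hpre⟩
        have hpre' : ∀ t : Fin n2, ω (Fin.castAdd m t) = Y := fun t => hpre _ t.2
        refine ⟨hpre', ?_⟩
        have hω : ω = Fin.append (fun _ : Fin n2 => Y) (fun j => ω (Fin.natAdd n2 j)) := by
          funext i
          refine Fin.addCases (fun t => ?_) (fun j => ?_) i
          · rw [Fin.append_left]; exact hpre' t
          · rw [Fin.append_right]
        rw [hω, countLe_append, hA'] at hos1
        rw [hω, countLe_append, hB'] at hos2
        exact ⟨by omega, by omega⟩
      · rintro ⟨hpre, hQm⟩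
        have hpre' : ∀ t : Fin (n2 + m), t.1 < n2 → ω t = Y := by
          intro t ht
          have : Fin.castAdd m (⟨t.1, ht⟩ : Fin n2) = t := rfl
          rw [← this]; exact hpre ⟨t.1, ht⟩
        have hω : ω = Fin.append (fun _ : Fin n2 => Y) (fun j => ω (Fin.natAdd n2 j)) := by
          funext i
          refine Fin.addCases (fun t => ?_) (fun j => ?_) i
          · rw [Fin.append_left]; exact hpre t
          · rw [Fin.append_right]
        obtain ⟨hq1, hq2⟩ := hQm
        refine ⟨⟨?_, ?_⟩, hpre'⟩
        · rw [hω, countLe_append, hA']; omega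
        · rw [hω, countLe_append, hB']; omega
    have hR : P f (d + m - n1 - n3)
          {ω | osEq (r - n1) ω Y ∧ ∀ t, t.1 < n2 → ω t = Y}
        = f Y ^ n2 * P f m Q := by
      have hstep : P f (d + m - n1 - n3)
            {ω | osEq (r - n1) ω Y ∧ ∀ t, t.1 < n2 → ω t = Y}
          = P f (n2 + m) {ω | osEq (r - n1) ω Y ∧ ∀ t, t.1 < n2 → ω t = Y} := by
        apply P_cast f hidx
        intro ω
        simp only [Set.mem_setOf_eq]
        constructor
        · rintro ⟨⟨hos1, hos2⟩, hpre⟩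
          refine ⟨⟨?_, ?_⟩, ?_⟩
          · rw [countLe_cast]; exact hos1
          · rw [countLe_cast]; exact hos2
          · intro t ht
            exact hpre (Fin.cast hidx t) ht
        · rintro ⟨⟨hos1, hos2⟩, hpre⟩
          refine ⟨⟨?_, ?_⟩, ?_⟩
          · rw [countLe_cast] at hos1; exact hos1
          · rw [countLe_cast] at hos2; exact hos2
          · intro t ht
            exact hpre (Fin.cast hidx.symm t) ht
      rw [hstep, hsetR, P_split f hf0 hf1 n2 m (fun _ => Y) Q]
      congr 1
      rw [Finset.prod_const, Finset.card_univ, Fintype.card_fin]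
    rw [hL, hR]
    ring
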